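/- The λ⁻-braiding relation is symmetric: if families (x_i)_{i∈κ} and (y_j)_{j∈κ} over a λ⁻-monoid X are λ⁻-braided, then (y_j)_{j∈κ} and (x_i)_{i∈κ} are λ⁻-braided. -/

import Mathlib

open scoped Classical

universe u v w

/-- A κ-monoid (Definition 2.1 of the paper), with the index cardinal κ modelled
by an (infinite) index type `ι`.  `base` plays the role of the element `0 ∈ κ`. -/
structure KappaMonoid (ι : Type u) (H : Type v) where
  zero : H
  base : ι
  sum : (ι → H) → H
  /-- (A1) -/
  sum_single : ∀ x : ι → H, (∀ i, i ≠ base → x i = zero) → sum x = x base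
  /-- (A2) -/
  sum_flatten : ∀ (x : ι × ι → H) (π : ι × ι ≃ ι),
    sum (fun i => sum fun j => x (i, j)) = sum fun k => x (π.symm k)

namespace KappaMonoid

variable {ι : Type u} {H : Type v}

/-- The family with value `a` at `i`, `b` at `j`, and `0` elsewhere. -/
noncomputable def pairFam (M : KappaMonoid ι H) (i j : ι) (a b : H) : ι → H :=
  fun k => if k = i then a else if k = j then b else M.zero

/-- The induced binary addition `a + b` on a κ-monoid. -/
noncomputable def add [Nontrivial ι] (M : KappaMonoid ι H) (a b : H) : H :=
  M.sum (M.pairFam M.base (Classical.choose (exists_ne M.base)) a b)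

/-- `α·a`, where the cardinal `α` is realized as the cardinality of `s ⊆ ι`:
the κ-sum of the family equal to `a` on `s` and `0` elsewhere. -/
noncomputable def smulSet (M : KappaMonoid ι H) (s : Set ι) (a : H) : H :=
  M.sum fun i => if i ∈ s then a else M.zero

/-- The κ-sum of the subfamily of `x` supported on `s` (padding by `0`). -/
noncomputable def sumOn (M : KappaMonoid ι H) (s : Set ι) (x : ι → H) : H :=
  M.sum fun i => if i ∈ s then x i else M.zero

end KappaMonoid
/-- A limit element of the well-order (the minimum counts as a limit element). -/
def IsLimitElt {ι : Type u} [Preorder ι] [SuccOrder ι] (μ : ι) : Prop :=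
  ¬ ∃ ν, ν < μ ∧ Order.succ ν = μ

/-- An indexed partition of the index set `ι` (blocks may be empty). -/
def IsIndexedPartition {ι : Type u} (I : ι → Set ι) : Prop :=
  (∀ μ ν, μ ≠ ν → Disjoint (I μ) (I ν)) ∧ (⋃ μ, I μ) = Set.univ

namespace KappaMonoid
variable {ι : Type u} {H : Type v}

/-- Definition 3.1(1): the families `x` and `y`, with entries in the λ⁻-submonoid
`X ⊆ H`, are λ⁻-braided: there are indexed partitions `(I_μ)`, `(J_μ)` of `ι` with
blocks of cardinality `< λ` and braiding families `(u_μ)`, `(v_μ)` in `X` with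
`v_μ = 0` at limit elements, such that `Σ_{i∈I_μ} x_i = v_μ + u_μ` and
`Σ_{j∈J_μ} y_j = v_{μ+1} + u_μ` for all `μ`. -/
noncomputable def Braided [Infinite ι] [LinearOrder ι] [SuccOrder ι]
    (M : KappaMonoid ι H) (lam : Cardinal.{u}) (X : Set H) (x y : ι → H) : Prop :=
  ∃ (I J : ι → Set ι) (u v : ι → H),
    IsIndexedPartition I ∧ IsIndexedPartition J ∧
    (∀ μ, Cardinal.mk (I μ) < lam) ∧ (∀ μ, Cardinal.mk (J μ) < lam) ∧
    (∀ μ, u μ ∈ X) ∧ (∀ μ, v μ ∈ X) ∧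
    (∀ μ, IsLimitElt μ → v μ = M.zero) ∧
    (∀ μ, M.sumOn (I μ) x = M.add (v μ) (u μ)) ∧
    (∀ μ, M.sumOn (J μ) y = M.add (v (Order.succ μ)) (u μ))

/-- `X` is a λ⁻-submonoid of the κ-monoid `H`: it contains `0` and is closed under
sums of families with support of cardinality `< λ`. -/
def IsSubmonoidLT (M : KappaMonoid ι H) (lam : Cardinal.{u}) (X : Set H) : Prop :=
  M.zero ∈ X ∧ ∀ x : ι → H, (∀ i, x i ∈ X) →
    Cardinal.mk {i | x i ≠ M.zero} < lam → M.sum x ∈ X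

/-- Definition 3.1(2): the κ-monoid `H` is λ⁻-braided over `X`: `X` generates `H`
as a κ-monoid, and any two κ-indexed families in `X` with equal κ-sums are
λ⁻-braided. -/
noncomputable def BraidedOver [Infinite ι] [LinearOrder ι] [SuccOrder ι]
    (M : KappaMonoid ι H) (lam : Cardinal.{u}) (X : Set H) : Prop :=
  (∀ h : H, ∃ x : ι → H, (∀ i, x i ∈ X) ∧ M.sum x = h) ∧
  ∀ x y : ι → H, (∀ i, x i ∈ X) → (∀ i, y i ∈ X) →
    M.sum x = M.sum y → M.Braided lam X x y

end KappaMonoid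
section Auxiliary

namespace KappaMonoid

variable {ι : Type u} {H : Type v} [Infinite ι] (M : KappaMonoid ι H)

lemma sum_zero' : M.sum (fun _ => M.zero) = M.zero :=
  M.sum_single _ (fun _ _ => rfl)

/-- Instance-insensitive description of `sumOn`. -/
lemma sum_ite_of_eq {s : Set ι} {x : ι → H} (f : ι → H)
    (hf : ∀ i, i ∈ s → f i = x i) (hf' : ∀ i, i ∉ s → f i = M.zero) :
    M.sum f = M.sumOn s x := by
  unfold sumOn
  refine congrArg M.sum (funext fun i => ?_)
  by_cases hi : i ∈ s
  · rw [hf i hi, if_pos hi]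
  · rw [hf' i hi, if_neg hi]

end KappaMonoid

/-- A fixed equivalence `ι × ι ≃ ι`. -/
noncomputable def sqEquiv (ι : Type u) [Infinite ι] : (ι × ι) ≃ ι := Classical.choice <| Cardinal.eq.mp <| by
  simp only [Cardinal.mk_prod, Cardinal.lift_id]
  exact Cardinal.mul_eq_self (Cardinal.aleph0_le_mk ι)

namespace KappaMonoid

variable {ι : Type u} {H : Type v} [Infinite ι] (M : KappaMonoid ι H)

lemma sum_row (y : ι → H) (π : (ι × ι) ≃ ι) :
    M.sum (fun k => if (π.symm k).1 = M.base then y (π.symm k).2 else M.zero)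
      = M.sum y := by
  have h2 : M.sum (fun i => M.sum fun j => if i = M.base then y j else M.zero)
      = M.sum (fun k => if (π.symm k).1 = M.base then y (π.symm k).2 else M.zero) :=
    M.sum_flatten (fun p => if p.1 = M.base then y p.2 else M.zero) π
  rw [← h2]
  have hf : ∀ i, i ≠ M.base →
      (M.sum fun j => if i = M.base then y j else M.zero) = M.zero := by
    intro i hi
    rw [show (fun j => if i = M.base then y j else M.zero) = (fun _ => M.zero) from
      funext fun j => if_neg hi, M.sum_zero']
  rw [M.sum_single _ hf]
  simp

lemma zsupp (y : ι → H) (p : ι × ι)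
    (h : (if p.1 = M.base then y p.2 else M.zero) ≠ M.zero) :
    p.1 = M.base ∧ y p.2 ≠ M.zero := by
  by_cases hb : p.1 = M.base
  · refine ⟨hb, ?_⟩; rwa [if_pos hb] at h
  · exact absurd (if_neg hb) h

lemma mk_zcompl (y : ι → H) :
    Cardinal.mk {p : ι × ι // ¬ (if p.1 = M.base then y p.2 else M.zero) ≠ M.zero}
      = Cardinal.mk ι := by
  obtain ⟨c, hc⟩ := exists_ne M.base
  apply le_antisymm
  · refine le_trans (Cardinal.mk_subtype_le _) ?_
    simp only [Cardinal.mk_prod, Cardinal.lift_id]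
    exact (Cardinal.mul_eq_self (Cardinal.aleph0_le_mk ι)).le
  · have hf : ∀ i : ι,
        ¬ (if ((c, i) : ι × ι).1 = M.base then y ((c, i) : ι × ι).2 else M.zero) ≠ M.zero := by
      intro i
      rw [not_not]
      exact if_neg hc
    exact Cardinal.mk_le_of_injective (f := fun i => ⟨(c, i), hf i⟩)
      (fun a b h => congrArg (fun q => q.1.2) h)

/-- The `{p // ... ≠ 0} ≃ {i // y i ≠ 0}` equivalence for row families. -/
noncomputable def rowSuppEquiv (y : ι → H) :
    {p : ι × ι // (if p.1 = M.base then y p.2 else M.zero) ≠ M.zero}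
      ≃ {i : ι // y i ≠ M.zero} where
  toFun p := ⟨p.1.2, (M.zsupp y p.1 p.2).2⟩
  invFun i := ⟨(M.base, i.1), by simpa using i.2⟩
  left_inv p := Subtype.ext (Prod.ext ((M.zsupp y p.1 p.2).1.symm) rfl)
  right_inv i := Subtype.ext rfl

/-- Master lemma: κ-sums agree for families matched by a support bijection. -/
lemma sum_congr_equiv (x x' : ι → H)
    (φ : {i // x i ≠ M.zero} ≃ {i // x' i ≠ M.zero})
    (hφ : ∀ k : {i // x i ≠ M.zero}, x' ((φ k) : ι) = x (k : ι)) :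
    M.sum x = M.sum x' := by
  obtain ⟨τ, hτ⟩ : ∃ τ : (ι × ι) ≃ (ι × ι),
      ∀ p : ι × ι, (if (τ p).1 = M.base then x (τ p).2 else M.zero)
            = (if p.1 = M.base then x' p.2 else M.zero) := by
    have hmk := (M.mk_zcompl x').trans (M.mk_zcompl x).symm
    obtain ⟨eC⟩ := Cardinal.eq.mp hmk
    let eS := (M.rowSuppEquiv x').trans ((φ.symm).trans (M.rowSuppEquiv x).symm)
    refine ⟨(Equiv.sumCompl
        (fun p : ι × ι => (if p.1 = M.base then x' p.2 else M.zero) ≠ M.zero)).symm.trans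
      ((eS.sumCongr eC).trans (Equiv.sumCompl
        (fun p : ι × ι => (if p.1 = M.base then x p.2 else M.zero) ≠ M.zero))), ?_⟩
    intro p
    by_cases h : (if p.1 = M.base then x' p.2 else M.zero) ≠ M.zero
    · have h1 : (((Equiv.sumCompl
          (fun p : ι × ι => (if p.1 = M.base then x' p.2 else M.zero) ≠ M.zero)).symm.trans
          ((eS.sumCongr eC).trans (Equiv.sumCompl
          (fun p : ι × ι => (if p.1 = M.base then x p.2 else M.zero) ≠ M.zero)))) p)
          = ((eS ⟨p, h⟩ : {p : ι × ι // (if p.1 = M.base then x p.2 else M.zero) ≠ M.zero}) : ι × ι) := by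
        rw [Equiv.trans_apply, Equiv.trans_apply,
          Equiv.sumCompl_symm_apply_of_pos
            (p := fun p : ι × ι => (if p.1 = M.base then x' p.2 else M.zero) ≠ M.zero) h,
          Equiv.sumCongr_apply, Sum.map_inl,
          Equiv.sumCompl_apply_inl]
      rw [h1]
      have h2 : ((eS ⟨p, h⟩ : {p : ι × ι // (if p.1 = M.base then x p.2 else M.zero) ≠ M.zero}) : ι × ι)
          = (M.base, ((φ.symm ⟨p.2, (M.zsupp x' p h).2⟩ : {i : ι // x i ≠ M.zero}) : ι)) := rfl
      rw [h2]
      rw [if_pos rfl, if_pos (M.zsupp x' p h).1]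
      have h3 := hφ (φ.symm ⟨p.2, (M.zsupp x' p h).2⟩)
      rw [Equiv.apply_symm_apply] at h3
      exact h3.symm
    · have h1 : (((Equiv.sumCompl
          (fun p : ι × ι => (if p.1 = M.base then x' p.2 else M.zero) ≠ M.zero)).symm.trans
          ((eS.sumCongr eC).trans (Equiv.sumCompl
          (fun p : ι × ι => (if p.1 = M.base then x p.2 else M.zero) ≠ M.zero)))) p)
          = ((eC ⟨p, h⟩) : ι × ι) := by
        rw [Equiv.trans_apply, Equiv.trans_apply,
          Equiv.sumCompl_symm_apply_of_neg
            (p := fun p : ι × ι => (if p.1 = M.base then x' p.2 else M.zero) ≠ M.zero) h,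
          Equiv.sumCongr_apply, Sum.map_inr,
          Equiv.sumCompl_apply_inr]
      rw [h1, not_not.mp (eC ⟨p, h⟩).2, not_not.mp h]
  have hA := M.sum_row x ((τ.symm).trans (sqEquiv ι))
  have hB := M.sum_row x' (sqEquiv ι)
  refine hA.symm.trans (Eq.trans ?_ hB)
  refine congrArg M.sum (funext fun k => ?_)
  rw [Equiv.symm_trans_apply, Equiv.symm_symm]
  exact hτ ((sqEquiv ι).symm k)

lemma sum_comp_perm (x : ι → H) (σ : ι ≃ ι) :
    M.sum (fun i => x (σ i)) = M.sum x :=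
  M.sum_congr_equiv _ _ (σ.subtypeEquiv fun _ => Iff.rfl) (fun _ => rfl)

lemma cbase_ne : Classical.choose (exists_ne M.base) ≠ M.base :=
  Classical.choose_spec (exists_ne M.base)

lemma add_eq (a b : H) {c : ι} (h : c = Classical.choose (exists_ne M.base)) :
    M.add a b = M.sum (M.pairFam M.base c a b) := by rw [h]; rfl

lemma add_zero' (a : H) : M.add a M.zero = a := by
  rw [M.add_eq a M.zero rfl, M.sum_single]
  · show (if M.base = M.base then a else _) = a
    rw [if_pos rfl]
  · intro i hi
    show (if i = M.base then a else if i = _ then M.zero else M.zero) = M.zero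
    rw [if_neg hi, ite_self]

lemma add_comm' (a b : H) : M.add a b = M.add b a := by
  have hc : Classical.choose (exists_ne M.base) ≠ M.base := M.cbase_ne
  rw [M.add_eq a b rfl, M.add_eq b a rfl]
  rw [← M.sum_comp_perm (M.pairFam M.base (Classical.choose (exists_ne M.base)) a b)
    (Equiv.swap M.base (Classical.choose (exists_ne M.base)))]
  refine congrArg M.sum (funext fun k => ?_)
  by_cases hk : k = M.base
  · subst hk
    rw [Equiv.swap_apply_left]
    simp [pairFam, hc]
  · by_cases hk2 : k = Classical.choose (exists_ne M.base)
    · subst hk2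
      rw [Equiv.swap_apply_right]
      simp [pairFam, hc, hk]
    · rw [Equiv.swap_apply_of_ne_of_ne hk hk2]
      simp [pairFam, hk, hk2]

lemma zero_add' (a : H) : M.add M.zero a = a := by
  rw [M.add_comm', M.add_zero']

lemma sum_single_pt (p : ι) (a : H) :
    M.sum (fun k => if k = p then a else M.zero) = a := by
  have hfun : (fun k => if k = p then a else M.zero)
      = fun k => (fun j => if j = M.base then a else M.zero)
          ((Equiv.swap M.base p).symm k) := by
    funext k
    by_cases hk : k = p
    · have h1 : (Equiv.swap M.base p).symm k = M.base := by
        rw [Equiv.symm_apply_eq, Equiv.swap_apply_left]; exact hk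
      rw [if_pos hk, h1]
      simp
    · have hne : (Equiv.swap M.base p) k ≠ M.base := fun hcontr =>
        hk ((Equiv.swap M.base p).injective
          (hcontr.trans (Equiv.swap_apply_right M.base p).symm))
      rw [if_neg hk]
      simp [hne]
  rw [hfun]
  refine (M.sum_comp_perm (fun j => if j = M.base then a else M.zero)
    (Equiv.swap M.base p).symm).trans ?_
  rw [M.sum_single _ (fun i hi => if_neg hi), if_pos rfl]

lemma sum_pair_pt (p q : ι) (hpq : p ≠ q) (a b : H) :
    M.sum (fun k => if k = p then a else if k = q then b else M.zero) = M.add a b := by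
  have hc : Classical.choose (exists_ne M.base) ≠ M.base := M.cbase_ne
  set c := Classical.choose (exists_ne M.base) with hcdef
  set τ1 := Equiv.swap M.base p with hτ1
  set σ := τ1.trans (Equiv.swap (τ1 c) q) with hσ
  have hτ1b : τ1 M.base = p := Equiv.swap_apply_left _ _
  have hσb : σ M.base = p := by
    rw [hσ, Equiv.trans_apply, hτ1b]
    refine Equiv.swap_apply_of_ne_of_ne ?_ hpq
    rw [← hτ1b]
    exact fun h => hc (τ1.injective h.symm)
  have hσc : σ c = q := by
    rw [hσ, Equiv.trans_apply]
    exact Equiv.swap_apply_left _ _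
  rw [M.add_eq a b hcdef,
    ← M.sum_comp_perm (M.pairFam M.base c a b) σ.symm]
  refine congrArg M.sum (funext fun k => ?_)
  by_cases hk : k = p
  · have hsy : σ.symm k = M.base := by rw [Equiv.symm_apply_eq, hσb]; exact hk
    rw [if_pos hk, hsy]
    simp [pairFam, hk]
  · by_cases hk2 : k = q
    · have hsy : σ.symm k = c := by rw [Equiv.symm_apply_eq, hσc]; exact hk2
      rw [if_neg hk, if_pos hk2, hsy]
      simp [pairFam, hc]
    · have h1 : σ.symm k ≠ M.base := fun hcontr => hk (by
        rw [← hσb]; exact (Equiv.symm_apply_eq σ).mp hcontr)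
      have h2 : σ.symm k ≠ c := fun hcontr => hk2 (by
        rw [← hσc]; exact (Equiv.symm_apply_eq σ).mp hcontr)
      rw [if_neg hk, if_neg hk2]
      simp [pairFam, h1, h2]

lemma sum_split (x : ι → H) (s : Set ι) :
    M.sum x = M.add (M.sumOn s x) (M.sumOn sᶜ x) := by
  have hc : Classical.choose (exists_ne M.base) ≠ M.base := M.cbase_ne
  set c := Classical.choose (exists_ne M.base) with hcdef
  set z : ι × ι → H := fun p =>
    if p.1 = M.base then (if p.2 ∈ s then x p.2 else M.zero)
    else if p.1 = c then (if p.2 ∈ s then M.zero else x p.2) else M.zero with hzdef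
  have hflat := M.sum_flatten z (sqEquiv ι)
  have hinner : (fun i => M.sum fun j => z (i, j))
      = M.pairFam M.base c (M.sumOn s x) (M.sumOn sᶜ x) := by
    funext i
    by_cases hib : i = M.base
    · subst hib
      rw [M.sum_ite_of_eq (s := s) (x := x) (fun j => z (M.base, j))
        (fun j hj => by simp [hzdef, hj]) (fun j hj => by simp [hzdef, hj])]
      unfold pairFam
      rw [if_pos rfl]
    · by_cases hic : i = c
      · subst hic
        rw [M.sum_ite_of_eq (s := sᶜ) (x := x) (fun j => z (c, j))
          (fun j hj => by
            have hj' : j ∉ s := hj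
            simp [hzdef, hc, hj'])
          (fun j hj => by
            have hj' : j ∈ s := not_not.mp hj
            simp [hzdef, hc, hj'])]
        unfold pairFam
        rw [if_neg hc, if_pos rfl]
      · have h1 : (fun j => z (i, j)) = fun _ => M.zero := by
          funext j; simp [hzdef, hib, hic]
        rw [h1, M.sum_zero']
        unfold pairFam
        rw [if_neg hib, if_neg hic]
  rw [M.add_eq _ _ hcdef, ← hinner, hflat]
  set e : ι → ι × ι := fun i => (if i ∈ s then M.base else c, i) with hedef
  have hze : ∀ i, z (e i) = x i := by
    intro i
    by_cases hi : i ∈ s <;> simp [hzdef, hedef, hi, hc]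
  have hsupp : ∀ p : ι × ι, z p ≠ M.zero → z p = x p.2 ∧ e p.2 = p := by
    intro p hp
    by_cases h1 : p.1 = M.base
    · have h2 : p.2 ∈ s := by
        by_contra h2; exact hp (by simp [hzdef, h1, h2])
      exact ⟨by simp [hzdef, h1, h2], Prod.ext (by simp [hedef, h2, h1.symm]) rfl⟩
    · by_cases h1c : p.1 = c
      · have h2 : p.2 ∉ s := by
          intro h2; exact hp (by simp [hzdef, h1, h1c, h2, hc])
        exact ⟨by simp [hzdef, h1, h1c, h2, hc], Prod.ext (by simp [hedef, h2, h1c.symm]) rfl⟩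
      · exact absurd (by simp [hzdef, h1, h1c, hc]) hp
  exact (M.sum_congr_equiv _ x
    { toFun := fun k => ⟨((sqEquiv ι).symm k.1).2, by rw [← (hsupp _ k.2).1]; exact k.2⟩
      invFun := fun i => ⟨(sqEquiv ι) (e i.1), by
        rw [Equiv.symm_apply_apply, hze]; exact i.2⟩
      left_inv := fun k => Subtype.ext (by
        show (sqEquiv ι) (e ((sqEquiv ι).symm k.1).2) = k.1
        rw [(hsupp _ k.2).2, Equiv.apply_symm_apply])
      right_inv := fun i => Subtype.ext (by
        show ((sqEquiv ι).symm ((sqEquiv ι) (e i.1))).2 = i.1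
        rw [Equiv.symm_apply_apply]) }
    (fun k => ((hsupp _ k.2).1).symm)).symm

lemma sumOn_union (x : ι → H) {s t : Set ι} (hst : Disjoint s t) :
    M.sumOn (s ∪ t) x = M.add (M.sumOn s x) (M.sumOn t x) := by
  have h := M.sum_split (fun i => if i ∈ s ∪ t then x i else M.zero) s
  have h1 : M.sumOn s (fun i => if i ∈ s ∪ t then x i else M.zero) = M.sumOn s x := by
    unfold sumOn
    refine congrArg M.sum (funext fun i => ?_)
    by_cases hi : i ∈ s <;> simp [hi]
  have h2 : M.sumOn sᶜ (fun i => if i ∈ s ∪ t then x i else M.zero) = M.sumOn t x := by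
    unfold sumOn
    refine congrArg M.sum (funext fun i => ?_)
    by_cases hi : i ∈ t
    · have his : i ∉ s := fun h' => (Set.disjoint_left.mp hst h') hi
      simp [his, hi]
    · by_cases his : i ∈ s <;> simp [his, hi]
  rw [h1, h2] at h
  rw [M.sum_ite_of_eq (s := s ∪ t) (x := x) (fun i => if i ∈ s ∪ t then x i else M.zero)
    (fun i hi => if_pos hi) (fun i hi => if_neg hi)] at h
  exact h

lemma add_assoc' (a b d : H) : M.add (M.add a b) d = M.add a (M.add b d) := by
  have hc : Classical.choose (exists_ne M.base) ≠ M.base := M.cbase_ne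
  set c := Classical.choose (exists_ne M.base) with hcdef
  obtain ⟨e, he1, he2⟩ : ∃ e : ι, e ≠ M.base ∧ e ≠ c := by
    have hfin : ({M.base, c} : Set ι).Finite := Set.toFinite _
    obtain ⟨e, he⟩ := hfin.infinite_compl.nonempty
    exact ⟨e, by simpa [not_or] using he⟩
  set T : ι → H := fun k =>
    if k = M.base then a else if k = c then b else if k = e then d else M.zero with hT
  have hs1 := M.sum_split T {M.base}
  have hs2 := M.sum_split T {M.base, c}
  have e11 : M.sumOn {M.base} T = a := by
    rw [← M.sum_ite_of_eq (s := {M.base}) (x := T) (fun i => if i = M.base then a else M.zero)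
      (fun i hi => by
        have hi' : i = M.base := hi
        simp [hT, hi'])
      (fun i hi => by
        have hi' : ¬ i = M.base := hi
        simp [hi'])]
    exact M.sum_single_pt _ a
  have e12 : M.sumOn {M.base}ᶜ T = M.add b d := by
    rw [← M.sum_ite_of_eq (s := {M.base}ᶜ) (x := T)
      (fun i => if i = c then b else if i = e then d else M.zero)
      (fun i hi => by
        have hi' : ¬ i = M.base := hi
        simp [hT, hi'])
      (fun i hi => by
        have hi' : i = M.base := not_not.mp hi
        simp [hi', Ne.symm hc, Ne.symm he1])]
    exact M.sum_pair_pt c e (fun h => he2 h.symm) b d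
  have e21 : M.sumOn {M.base, c} T = M.add a b := by
    rw [← M.sum_ite_of_eq (s := {M.base, c}) (x := T) (M.pairFam M.base c a b)
      (fun i hi => by
        rcases Set.mem_insert_iff.mp hi with hi' | hi'
        · simp [hT, pairFam, hi']
        · have hic : i = c := hi'
          simp [hT, pairFam, hic, hc]
      )
      (fun i hi => by
        rw [Set.mem_insert_iff, not_or] at hi
        have h2 : ¬ i = c := hi.2
        simp [hT, pairFam, hi.1, h2])]
    exact (M.add_eq a b hcdef).symm
  have e22 : M.sumOn {M.base, c}ᶜ T = d := by
    rw [← M.sum_ite_of_eq (s := {M.base, c}ᶜ) (x := T)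
      (fun i => if i = e then d else M.zero)
      (fun i hi => by
        have hi' : ¬ (i = M.base ∨ i = c) := hi
        rw [not_or] at hi'
        simp [hT, hi'.1, hi'.2])
      (fun i hi => by
        have hi' : i = M.base ∨ i = c := not_not.mp hi
        rcases hi' with hi' | hi' <;> simp [hT, hi', Ne.symm he1, Ne.symm he2])]
    exact M.sum_single_pt e d
  rw [e11, e12] at hs1
  rw [e21, e22] at hs2
  exact hs2.symm.trans hs1

lemma add_rot (a b d : H) : M.add a (M.add b d) = M.add d (M.add a b) := by
  rw [← M.add_assoc', M.add_comm']

lemma add_mem {lam : Cardinal.{u}} (hreg : lam.IsRegular) {X : Set H}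
    (hX : M.IsSubmonoidLT lam X) {a b : H} (ha : a ∈ X) (hb : b ∈ X) :
    M.add a b ∈ X := by
  rw [M.add_eq a b rfl]
  refine hX.2 _ ?_ ?_
  · intro i
    unfold pairFam
    split_ifs
    · exact ha
    · exact hb
    · exact hX.1
  · have hsub : {i | M.pairFam M.base (Classical.choose (exists_ne M.base)) a b i ≠ M.zero}
        ⊆ {M.base, Classical.choose (exists_ne M.base)} := by
      intro i hi
      by_contra hmem
      rw [Set.mem_insert_iff, not_or] at hmem
      have h2 : ¬ i = Classical.choose (exists_ne M.base) := hmem.2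
      exact hi (by simp [pairFam, hmem.1, h2])
    have hfin : {i | M.pairFam M.base (Classical.choose (exists_ne M.base)) a b i ≠ M.zero}.Finite :=
      Set.Finite.subset ((Set.finite_singleton _).insert _) hsub
    exact lt_of_lt_of_le hfin.lt_aleph0 hreg.aleph0_le

end KappaMonoid

lemma not_isLimitElt_succ {κ : Type w} [LinearOrder κ] [SuccOrder κ] [NoMaxOrder κ] (μ : κ) :
    ¬ IsLimitElt (Order.succ μ) := fun h => h ⟨μ, Order.lt_succ μ, rfl⟩

lemma IsLimitElt.succ_ne {κ : Type w} [LinearOrder κ] [SuccOrder κ] [NoMaxOrder κ] {μ : κ}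
    (h : IsLimitElt μ) (ν : κ) : Order.succ ν ≠ μ :=
  fun he => h ⟨ν, he ▸ Order.lt_succ ν, he⟩

end Auxiliary

/-- Lemma 3.7(2) (symmetry): the λ⁻-braiding relation on κ-indexed families over a
λ⁻-(sub)monoid `X` is symmetric. -/
theorem braided_symm {ι : Type u} {H : Type v} [Infinite ι] [LinearOrder ι]
    [SuccOrder ι] [NoMaxOrder ι] [WellFoundedLT ι]
    (M : KappaMonoid ι H) (lam : Cardinal.{u}) (hreg : lam.IsRegular)
    (X : Set H) (hX : M.IsSubmonoidLT lam X)
    (x y : ι → H) (hx : ∀ i, x i ∈ X) (hy : ∀ i, y i ∈ X)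
    (hbr : M.Braided lam X x y) :
    M.Braided lam X y x := by
  obtain ⟨I, J, u, v, hIp, hJp, hIc, hJc, hu, hv, hvlim, hIx, hJy⟩ := hbr
  set J' : ι → Set ι := fun μ =>
    if IsLimitElt μ then I μ ∪ I (Order.succ μ) else I (Order.succ μ) with hJ'
  set u' : ι → H := fun μ =>
    if IsLimitElt μ then M.add (u μ) (v (Order.succ μ)) else v (Order.succ μ) with hu'
  set v' : ι → H := fun μ => if IsLimitElt μ then M.zero else u μ with hv'
  have hne : ∀ μ : ι, μ ≠ Order.succ μ := fun μ => (Order.lt_succ μ).ne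
  have hsn : ∀ μ ν : ι, μ ≠ ν → Order.succ μ ≠ Order.succ ν :=
    fun _ _ h he => h (Order.succ_injective he)
  refine ⟨J, J', u', v', hJp, ?_, hJc, ?_, ?_, ?_, ?_, ?_, ?_⟩
  · constructor
    · intro μ ν hμν
      simp only [hJ']
      by_cases hμ : IsLimitElt μ <;> by_cases hν : IsLimitElt ν
      · rw [if_pos hμ, if_pos hν]
        refine Set.disjoint_union_left.mpr ⟨?_, ?_⟩
        · exact Set.disjoint_union_right.mpr
            ⟨hIp.1 _ _ hμν, hIp.1 _ _ (fun h => (hμ.succ_ne ν) h.symm)⟩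
        · exact Set.disjoint_union_right.mpr
            ⟨hIp.1 _ _ (hν.succ_ne μ), hIp.1 _ _ (hsn _ _ hμν)⟩
      · rw [if_pos hμ, if_neg hν]
        exact Set.disjoint_union_left.mpr
          ⟨hIp.1 _ _ (fun h => (hμ.succ_ne ν) h.symm), hIp.1 _ _ (hsn _ _ hμν)⟩
      · rw [if_neg hμ, if_pos hν]
        exact Set.disjoint_union_right.mpr
          ⟨hIp.1 _ _ (hν.succ_ne μ), hIp.1 _ _ (hsn _ _ hμν)⟩
      · rw [if_neg hμ, if_neg hν]
        exact hIp.1 _ _ (hsn _ _ hμν)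
    · rw [Set.eq_univ_iff_forall]
      intro k
      have hk : k ∈ ⋃ μ, I μ := hIp.2.symm ▸ Set.mem_univ k
      rw [Set.mem_iUnion] at hk
      obtain ⟨ρ, hρ⟩ := hk
      rw [Set.mem_iUnion]
      by_cases hρl : IsLimitElt ρ
      · refine ⟨ρ, ?_⟩
        simp only [hJ']
        rw [if_pos hρl]
        exact Set.mem_union_left _ hρ
      · obtain ⟨σ, hσlt, hσ⟩ := not_not.mp hρl
        refine ⟨σ, ?_⟩
        simp only [hJ']
        by_cases hσl : IsLimitElt σ
        · rw [if_pos hσl, hσ]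
          exact Set.mem_union_right _ hρ
        · rw [if_neg hσl, hσ]
          exact hρ
  · intro μ
    simp only [hJ']
    by_cases hμ : IsLimitElt μ
    · rw [if_pos hμ]
      exact lt_of_le_of_lt (Cardinal.mk_union_le _ _)
        (Cardinal.add_lt_of_lt hreg.aleph0_le (hIc μ) (hIc _))
    · rw [if_neg hμ]
      exact hIc _
  · intro μ
    simp only [hu']
    by_cases hμ : IsLimitElt μ
    · rw [if_pos hμ]
      exact M.add_mem hreg hX (hu μ) (hv _)
    · rw [if_neg hμ]
      exact hv _
  · intro μ
    simp only [hv']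
    by_cases hμ : IsLimitElt μ
    · rw [if_pos hμ]
      exact hX.1
    · rw [if_neg hμ]
      exact hu _
  · intro μ hμ
    simp only [hv']
    rw [if_pos hμ]
  · intro μ
    simp only [hu', hv']
    by_cases hμ : IsLimitElt μ
    · rw [if_pos hμ, if_pos hμ, hJy μ, M.zero_add', M.add_comm']
    · rw [if_neg hμ, if_neg hμ, hJy μ, M.add_comm']
  · intro μ
    simp only [hJ', hu', hv']
    rw [if_neg (not_isLimitElt_succ μ)]
    by_cases hμ : IsLimitElt μ
    · rw [if_pos hμ, if_pos hμ,
        M.sumOn_union x (hIp.1 μ (Order.succ μ) (hne μ)), hIx, hIx,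
        hvlim μ hμ, M.zero_add', M.add_rot]
    · rw [if_neg hμ, if_neg hμ, hIx, M.add_comm']
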